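/- Let m ≥ 1 be an integer and k, A, B ∈ ℂ with k ≠ 0. Set w = i k + (1−m)/2, and assume that none of the complex numbers 2ik+m, −2ik+m, (1±m)/2 + A ± ik, (1±m)/2 + B ± ik, w, 1−w, w+m, 1−w−m, B−w−m+1, B+w, B−w+1, B+w+m, A−w−m+1, A+w, A−w+1, A+w+m is a nonpositive integer, and that (w)_m ≠ 0. Then (1/(4ik)) · (2k/π) · sinh(2πk) · Γ(2ik+m) Γ(−2ik+m) · [Γ((1−m)/2+A+ik) Γ((1−m)/2+A−ik)]/[Γ((1+m)/2+A+ik) Γ((1+m)/2+A−ik)] · [Γ((1−m)/2+B+ik) Γ((1−m)/2+B−ik)]/[Γ((1+m)/2+B+ik) Γ((1+m)/2+B−ik)] = 2^{2m} · (w+1/2)_{m−1}/(4 (w)_m) · [Γ(1−w) Γ(w+m)]/[Γ(1−w−m) Γ(w)] · [Γ(B−w−m+1) Γ(B+w)]/[Γ(B−w+1) Γ(B+w+m)] · [Γ(A−w−m+1) Γ(A+w)]/[Γ(A−w+1) Γ(A+w+m)]. (This identity shows that the Bethe-ansatz string weight B_{k,m}/(4ik) coincides with the residue factor arising from the log-gamma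 polymer moment formula.) -/

import Mathlib

open Complex Finset

/-- The rising factorial (Pochhammer symbol) `(x)_ℓ = x(x+1)⋯(x+ℓ−1)`, with `(x)_0 = 1`. -/
noncomputable def risingFactorial (x : ℂ) (l : ℕ) : ℂ := ∏ i ∈ Finset.range l, (x + (i : ℂ))

private lemma rf_chain {x : ℂ} {l : ℕ} (h : risingFactorial x l ≠ 0) :
    ∀ j < l, x + (j : ℂ) ≠ 0 := by
  intro j hj
  simp only [risingFactorial, Finset.prod_ne_zero_iff] at h
  exact h j (Finset.mem_range.mpr hj)

private lemma Gamma_add_nat (z : ℂ) (n : ℕ) (h : ∀ j < n, z + (j : ℂ) ≠ 0) :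
    Complex.Gamma (z + (n : ℂ)) = risingFactorial z n * Complex.Gamma z := by
  induction n with
  | zero => simp [risingFactorial]
  | succ n ih =>
      have h1 : z + ((n + 1 : ℕ) : ℂ) = (z + (n : ℂ)) + 1 := by push_cast; ring
      rw [h1, Complex.Gamma_add_one _ (h n (Nat.lt_succ_self n)),
        ih (fun j hj => h j (hj.trans (Nat.lt_succ_self n)))]
      simp only [risingFactorial, Finset.prod_range_succ]
      ring

private lemma rf_double (w : ℂ) (n : ℕ) :
    risingFactorial (2 * w) (2 * n + 1)
      = 2 ^ (2 * n + 1) * risingFactorial w (n + 1) * risingFactorial (w + 1 / 2) n := by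
  induction n with
  | zero => simp [risingFactorial]
  | succ n ih =>
      have h1 : 2 * (n + 1) + 1 = (2 * n + 1) + 1 + 1 := by ring
      rw [h1]
      simp only [risingFactorial, Finset.prod_range_succ] at ih ⊢
      rw [ih]
      push_cast
      ring

private lemma rf_reflect (w : ℂ) (m : ℕ) :
    risingFactorial (1 - w - (m : ℂ)) m = (-1) ^ m * risingFactorial w m := by
  unfold risingFactorial
  rw [← Finset.prod_range_reflect (fun j => (1 - w - (m : ℂ) + j)) m]
  rw [show ((-1 : ℂ)) ^ m = ∏ _j ∈ Finset.range m, (-1 : ℂ) from by simp, ← Finset.prod_mul_distrib]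
  refine Finset.prod_congr rfl fun j hj => ?_
  rw [Finset.mem_range] at hj
  have h2 : ((m - 1 - j : ℕ) : ℂ) = (m : ℂ) - 1 - j := by
    push_cast [Nat.cast_sub (show 1 ≤ m by omega), Nat.cast_sub (show j ≤ m - 1 by omega)]
    ring
  rw [h2]
  ring

private lemma sin_add_nat_mul_pi' (x : ℂ) (n : ℕ) :
    Complex.sin (x + (n : ℂ) * (Real.pi : ℂ)) = (-1) ^ n * Complex.sin x := by
  induction n with
  | zero => simp
  | succ n ih =>
      have h1 : x + ((n + 1 : ℕ) : ℂ) * (Real.pi : ℂ)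
          = (x + (n : ℂ) * (Real.pi : ℂ)) + (Real.pi : ℂ) := by push_cast; ring
      rw [h1, Complex.sin_add_pi, ih]
      ring
theorem string_weight_eq_residue_factor (m : ℕ) (hm : 1 ≤ m) (k A B : ℂ) (hk : k ≠ 0)
    (w : ℂ) (hw : w = I * k + (1 - (m : ℂ)) / 2)
    (hpoles : ∀ z ∈ [2 * I * k + (m : ℂ), -2 * I * k + (m : ℂ),
        (1 + (m : ℂ)) / 2 + A + I * k, (1 + (m : ℂ)) / 2 + A - I * k,
        (1 - (m : ℂ)) / 2 + A + I * k, (1 - (m : ℂ)) / 2 + A - I * k,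
        (1 + (m : ℂ)) / 2 + B + I * k, (1 + (m : ℂ)) / 2 + B - I * k,
        (1 - (m : ℂ)) / 2 + B + I * k, (1 - (m : ℂ)) / 2 + B - I * k,
        w, 1 - w, w + (m : ℂ), 1 - w - (m : ℂ),
        B - w - (m : ℂ) + 1, B + w, B - w + 1, B + w + (m : ℂ),
        A - w - (m : ℂ) + 1, A + w, A - w + 1, A + w + (m : ℂ)],
      ∀ n : ℕ, z ≠ -(n : ℂ))
    (hpoch : risingFactorial w m ≠ 0) :
    (1 / (4 * I * k)) * (2 * k / (Real.pi : ℂ)) * Complex.sinh (2 * (Real.pi : ℂ) * k) *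
      Complex.Gamma (2 * I * k + (m : ℂ)) * Complex.Gamma (-2 * I * k + (m : ℂ)) *
      ((Complex.Gamma ((1 - (m : ℂ)) / 2 + A + I * k) *
          Complex.Gamma ((1 - (m : ℂ)) / 2 + A - I * k)) /
        (Complex.Gamma ((1 + (m : ℂ)) / 2 + A + I * k) *
          Complex.Gamma ((1 + (m : ℂ)) / 2 + A - I * k))) *
      ((Complex.Gamma ((1 - (m : ℂ)) / 2 + B + I * k) *
          Complex.Gamma ((1 - (m : ℂ)) / 2 + B - I * k)) /
        (Complex.Gamma ((1 + (m : ℂ)) / 2 + B + I * k) *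
          Complex.Gamma ((1 + (m : ℂ)) / 2 + B - I * k)))
    = 2 ^ (2 * m) * (risingFactorial (w + 1 / 2) (m - 1) / (4 * risingFactorial w m)) *
        ((Complex.Gamma (1 - w) * Complex.Gamma (w + (m : ℂ))) /
          (Complex.Gamma (1 - w - (m : ℂ)) * Complex.Gamma w)) *
        ((Complex.Gamma (B - w - (m : ℂ) + 1) * Complex.Gamma (B + w)) /
          (Complex.Gamma (B - w + 1) * Complex.Gamma (B + w + (m : ℂ)))) *
        ((Complex.Gamma (A - w - (m : ℂ) + 1) * Complex.Gamma (A + w)) /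
          (Complex.Gamma (A - w + 1) * Complex.Gamma (A + w + (m : ℂ)))) := by
  obtain ⟨m', rfl⟩ : ∃ m'', m = m'' + 1 := ⟨m - 1, by omega⟩
  simp only [Nat.add_sub_cancel]
  have hπ : (Real.pi : ℂ) ≠ 0 := Complex.ofReal_ne_zero.mpr Real.pi_ne_zero
  have hik : I * k = w + (m' : ℂ) / 2 := by rw [hw]; push_cast; ring
  -- argument rewrites
  have e1 : 2 * I * k + ((m' + 1 : ℕ) : ℂ) = 2 * w + ((2 * m' + 1 : ℕ) : ℂ) := by
    push_cast; linear_combination 2 * hik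
  have e2 : -2 * I * k + ((m' + 1 : ℕ) : ℂ) = 1 - 2 * w := by
    push_cast; linear_combination (-2) * hik
  have eA1 : (1 - ((m' + 1 : ℕ) : ℂ)) / 2 + A + I * k = A + w := by
    push_cast; linear_combination hik
  have eA2 : (1 - ((m' + 1 : ℕ) : ℂ)) / 2 + A - I * k = A - w - ((m' + 1 : ℕ) : ℂ) + 1 := by
    push_cast; linear_combination -hik
  have eA3 : (1 + ((m' + 1 : ℕ) : ℂ)) / 2 + A + I * k = A + w + ((m' + 1 : ℕ) : ℂ) := by
    push_cast; linear_combination hik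
  have eA4 : (1 + ((m' + 1 : ℕ) : ℂ)) / 2 + A - I * k = A - w + 1 := by
    push_cast; linear_combination -hik
  have eB1 : (1 - ((m' + 1 : ℕ) : ℂ)) / 2 + B + I * k = B + w := by
    push_cast; linear_combination hik
  have eB2 : (1 - ((m' + 1 : ℕ) : ℂ)) / 2 + B - I * k = B - w - ((m' + 1 : ℕ) : ℂ) + 1 := by
    push_cast; linear_combination -hik
  have eB3 : (1 + ((m' + 1 : ℕ) : ℂ)) / 2 + B + I * k = B + w + ((m' + 1 : ℕ) : ℂ) := by
    push_cast; linear_combination hik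
  have eB4 : (1 + ((m' + 1 : ℕ) : ℂ)) / 2 + B - I * k = B - w + 1 := by
    push_cast; linear_combination -hik
  -- nonvanishing of Gammas
  have hΓw : Complex.Gamma w ≠ 0 := Complex.Gamma_ne_zero (hpoles w (by simp))
  have hΓm : Complex.Gamma (1 - w - ((m' + 1 : ℕ) : ℂ)) ≠ 0 :=
    Complex.Gamma_ne_zero (hpoles _ (by simp))
  have hch : ∀ j < m' + 1, w + (j : ℂ) ≠ 0 := rf_chain hpoch
  -- Gamma shift identities
  have hG1 : Complex.Gamma (w + ((m' + 1 : ℕ) : ℂ))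
      = risingFactorial w (m' + 1) * Complex.Gamma w := Gamma_add_nat _ _ hch
  have hG2 : Complex.Gamma (1 - w)
      = risingFactorial (1 - w - ((m' + 1 : ℕ) : ℂ)) (m' + 1) *
          Complex.Gamma (1 - w - ((m' + 1 : ℕ) : ℂ)) := by
    have hchain : ∀ j < m' + 1, (1 - w - ((m' + 1 : ℕ) : ℂ)) + (j : ℂ) ≠ 0 := by
      intro j hj h0
      refine hch (m' - j) (by omega) ?_
      have hc : ((m' - j : ℕ) : ℂ) = (m' : ℂ) - j := by
        push_cast [Nat.cast_sub (show j ≤ m' by omega)]; ring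
      rw [hc]
      push_cast at h0
      linear_combination -h0
    have h := Gamma_add_nat (1 - w - ((m' + 1 : ℕ) : ℂ)) (m' + 1) hchain
    rwa [show (1 - w - ((m' + 1 : ℕ) : ℂ)) + ((m' + 1 : ℕ) : ℂ) = 1 - w from by ring] at h
  have hrefl : risingFactorial (1 - w - ((m' + 1 : ℕ) : ℂ)) (m' + 1)
      = (-1) ^ (m' + 1) * risingFactorial w (m' + 1) := rf_reflect w (m' + 1)
  -- simplification of the Gamma part of the RHS
  have hR0 : 2 ^ (2 * (m' + 1)) *
        (risingFactorial (w + 1 / 2) m' / (4 * risingFactorial w (m' + 1))) *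
        ((Complex.Gamma (1 - w) * Complex.Gamma (w + ((m' + 1 : ℕ) : ℂ))) /
          (Complex.Gamma (1 - w - ((m' + 1 : ℕ) : ℂ)) * Complex.Gamma w))
      = (-1) ^ (m' + 1) * 2 ^ (2 * (m' + 1)) / 4 * risingFactorial (w + 1 / 2) m' *
          risingFactorial w (m' + 1) := by
    rw [hG1, hG2, hrefl]
    have hq : (((-1) ^ (m' + 1) * risingFactorial w (m' + 1)) *
          Complex.Gamma (1 - w - ((m' + 1 : ℕ) : ℂ)) *
          (risingFactorial w (m' + 1) * Complex.Gamma w)) /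
        (Complex.Gamma (1 - w - ((m' + 1 : ℕ) : ℂ)) * Complex.Gamma w)
        = (-1) ^ (m' + 1) * risingFactorial w (m' + 1) * risingFactorial w (m' + 1) := by
      rw [div_eq_iff (mul_ne_zero hΓm hΓw)]
      ring
    rw [hq]
    field_simp [hpoch]
  -- the key scalar identity
  have key : (1 / (4 * I * k)) * (2 * k / (Real.pi : ℂ)) *
        Complex.sinh (2 * (Real.pi : ℂ) * k) *
        Complex.Gamma (2 * I * k + ((m' + 1 : ℕ) : ℂ)) *
        Complex.Gamma (-2 * I * k + ((m' + 1 : ℕ) : ℂ))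
      = 2 ^ (2 * (m' + 1)) *
          (risingFactorial (w + 1 / 2) m' / (4 * risingFactorial w (m' + 1))) *
          ((Complex.Gamma (1 - w) * Complex.Gamma (w + ((m' + 1 : ℕ) : ℂ))) /
            (Complex.Gamma (1 - w - ((m' + 1 : ℕ) : ℂ)) * Complex.Gamma w)) := by
    rw [hR0, e1, e2]
    have hsinh : Complex.sinh (2 * (Real.pi : ℂ) * k)
        = -(Complex.sin ((Real.pi : ℂ) * (2 * w + (m' : ℂ)))) * I := by
      have h2 : 2 * (Real.pi : ℂ) * k = (-((Real.pi : ℂ) * (2 * w + (m' : ℂ)))) * I := by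
        linear_combination (-2 * (Real.pi : ℂ) * I) * hik + (2 * (Real.pi : ℂ) * k) * Complex.I_sq
      rw [h2, Complex.sinh_mul_I, Complex.sin_neg]
    by_cases hz : risingFactorial (w + 1 / 2) m' = 0
    · -- degenerate case: sinh vanishes
      have hex : ∃ j ∈ Finset.range m', w + 1 / 2 + (j : ℂ) = 0 := by
        simpa only [risingFactorial, Finset.prod_eq_zero_iff] using hz
      obtain ⟨j, hjm, hj0⟩ := hex
      rw [Finset.mem_range] at hjm
      have hc : 2 * w + (m' : ℂ) = (((m' : ℤ) - 1 - 2 * j : ℤ) : ℂ) := by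
        push_cast; linear_combination 2 * hj0
      have hsinh0 : Complex.sinh (2 * (Real.pi : ℂ) * k) = 0 := by
        rw [hsinh, hc, mul_comm ((Real.pi : ℂ)), Complex.sin_int_mul_pi]
        ring
      rw [hsinh0, hz]
      ring
    · -- nondegenerate case
      have hch2 : ∀ j < m', w + 1 / 2 + (j : ℂ) ≠ 0 := rf_chain hz
      have chain2 : ∀ j < 2 * m' + 1, 2 * w + (j : ℂ) ≠ 0 := by
        intro j hj
        rcases Nat.even_or_odd j with ⟨a, ha⟩ | ⟨a, ha⟩
        · subst ha
          intro h0
          refine hch a (by omega) ?_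
          push_cast at h0
          linear_combination h0 / 2
        · subst ha
          intro h0
          refine hch2 a (by omega) ?_
          push_cast at h0
          linear_combination h0 / 2
      have hG3 : Complex.Gamma (2 * w + ((2 * m' + 1 : ℕ) : ℂ))
          = risingFactorial (2 * w) (2 * m' + 1) * Complex.Gamma (2 * w) :=
        Gamma_add_nat _ _ chain2
      have hsne : Complex.sin ((Real.pi : ℂ) * (2 * w)) ≠ 0 := by
        intro h0
        rw [Complex.sin_eq_zero_iff] at h0
        obtain ⟨n, hn⟩ := h0
        have h2w : 2 * w = (n : ℂ) := by
          apply mul_right_cancel₀ hπ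
          linear_combination hn
        have hp1 : ∀ t : ℕ, 2 * I * k + ((m' + 1 : ℕ) : ℂ) ≠ -(t : ℂ) := hpoles _ (by simp)
        have hp2 : ∀ t : ℕ, -2 * I * k + ((m' + 1 : ℕ) : ℂ) ≠ -(t : ℂ) := hpoles _ (by simp)
        rw [e1] at hp1
        rw [e2] at hp2
        by_cases hn1 : 1 ≤ n
        · obtain ⟨t, ht⟩ : ∃ t : ℕ, n = 1 + (t : ℤ) := ⟨(n - 1).toNat, by omega⟩
          refine hp2 t ?_
          have hc : (n : ℂ) = 1 + (t : ℂ) := by exact_mod_cast ht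
          rw [h2w, hc]; ring
        · by_cases hn2 : -(2 * (m' : ℤ)) ≤ n
          · obtain ⟨t, ht, hlt⟩ : ∃ t : ℕ, n = -(t : ℤ) ∧ t < 2 * m' + 1 :=
              ⟨(-n).toNat, by omega, by omega⟩
            refine chain2 t hlt ?_
            have hc : (n : ℂ) = -(t : ℂ) := by exact_mod_cast ht
            rw [h2w, hc]; ring
          · obtain ⟨t, ht⟩ : ∃ t : ℕ, n = -(t : ℤ) - 2 * (m' : ℤ) - 1 :=
              ⟨(-(n + 2 * (m' : ℤ) + 1)).toNat, by omega⟩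
            refine hp1 t ?_
            have hc : (n : ℂ) = -(t : ℂ) - 2 * (m' : ℂ) - 1 := by exact_mod_cast ht
            rw [h2w]
            push_cast
            rw [hc]; ring
      have hrefl2 : Complex.Gamma (2 * w) * Complex.Gamma (1 - 2 * w) *
          Complex.sin ((Real.pi : ℂ) * (2 * w)) = (Real.pi : ℂ) := by
        rw [Complex.Gamma_mul_Gamma_one_sub]
        field_simp
        exact div_self (by rwa [← mul_assoc] at hsne)
      have hs1 : Complex.sin ((Real.pi : ℂ) * (2 * w + (m' : ℂ)))
          = (-1) ^ m' * Complex.sin ((Real.pi : ℂ) * (2 * w)) := by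
        rw [show (Real.pi : ℂ) * (2 * w + (m' : ℂ))
            = (Real.pi : ℂ) * (2 * w) + (m' : ℂ) * (Real.pi : ℂ) from by ring]
        exact sin_add_nat_mul_pi' _ m'
      rw [hsinh, hs1, hG3, rf_double]
      have hstep : (1 : ℂ) / (4 * I * k) * (2 * k / (Real.pi : ℂ)) *
          (-((-1) ^ m' * Complex.sin ((Real.pi : ℂ) * (2 * w))) * I)
          = -(-1) ^ m' * Complex.sin ((Real.pi : ℂ) * (2 * w)) / (2 * (Real.pi : ℂ)) := by
        field_simp
        ring
      rw [hstep, div_mul_eq_mul_div, div_mul_eq_mul_div,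
        div_eq_iff (mul_ne_zero (two_ne_zero) hπ)]
      linear_combination (-(-1 : ℂ) ^ m' * 2 ^ (2 * m' + 1) * risingFactorial w (m' + 1) *
        risingFactorial (w + 1 / 2) m') * hrefl2
  rw [eA1, eA2, eA3, eA4, eB1, eB2, eB3, eB4, key]
  ring
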